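/- Let 𝔤 be a quadratic Lie algebra with generalized metric 𝔤 = V₊ ⊕ V₋, where dim V₊ ≥ 2 and dim V₋ ≥ 2. Then for every linear functional ξ: 𝔤 → ℝ there exists a torsion-free V₊-compatible generalized connection D on 𝔤 with divergence div_D = ξ. (That is, the space 𝒟(V₊, div) of V₊-compatible torsion-free generalized connections with prescribed divergence is non-empty for every prescribed divergence.) -/

import Mathlib

open LinearMap

section helpers

variable {V : Type*} [AddCommGroup V] [Module ℝ V] [FiniteDimensional ℝ V]

lemma my_trace_smulRight (f : V →ₗ[ℝ] ℝ) (x : V) :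
    LinearMap.trace ℝ V (f.smulRight x) = f x := by
  have h : f.smulRight x = dualTensorHom ℝ V V (f ⊗ₜ[ℝ] x) := by
    ext a; simp [dualTensorHom_apply]
  rw [h, LinearMap.trace_eq_contract_apply, contractLeft_apply]

end helpers

set_option maxHeartbeats 2000000 in
theorem statement_14
    {𝔤 : Type*} [LieRing 𝔤] [LieAlgebra ℝ 𝔤] [FiniteDimensional ℝ 𝔤]
    (B : 𝔤 →ₗ[ℝ] 𝔤 →ₗ[ℝ] ℝ)
    (hB_symm : ∀ x y, B x y = B y x)
    (hB_nondeg : ∀ x, (∀ y, B x y = 0) → x = 0)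
    (hB_inv : ∀ x y z, B ⁅x, y⁆ z = B x ⁅y, z⁆)
    (Vp Vm : Submodule ℝ 𝔤)
    (hcompl : IsCompl Vp Vm)
    (horth : ∀ x ∈ Vp, ∀ y ∈ Vm, B x y = 0)
    (hndp : ∀ x ∈ Vp, (∀ y ∈ Vp, B x y = 0) → x = 0)
    (hdimp : 2 ≤ Module.finrank ℝ Vp)
    (hdimm : 2 ≤ Module.finrank ℝ Vm)
    (ξ : 𝔤 →ₗ[ℝ] ℝ) :
    ∃ D : 𝔤 →ₗ[ℝ] 𝔤 →ₗ[ℝ] 𝔤,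
      (∀ e a b, B (D e a) b + B a (D e b) = 0) ∧
      (∀ e, ∀ x ∈ Vp, D e x ∈ Vp) ∧ (∀ e, ∀ x ∈ Vm, D e x ∈ Vm) ∧
      (∀ e₁ e₂ e₃, B (D e₁ e₂ - D e₂ e₁ - ⁅e₁, e₂⁆) e₃ + B (D e₃ e₁) e₂ = 0) ∧
      (∀ e, LinearMap.trace ℝ 𝔤 (D.flip e) = ξ e) := by
  classical
  -- projections
  set P : 𝔤 →ₗ[ℝ] 𝔤 := Vp.subtype ∘ₗ (Vp.projectionOnto Vm hcompl) with hPdef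
  set Q : 𝔤 →ₗ[ℝ] 𝔤 := LinearMap.id - P with hQdef
  have hPmem : ∀ x, P x ∈ Vp := fun x => (Vp.projectionOnto Vm hcompl x).2
  have hPp : ∀ x ∈ Vp, P x = x := by
    intro x hx
    simp [hPdef, Submodule.projectionOnto_apply_of_mem_left hcompl hx]
  have hPm : ∀ x ∈ Vm, P x = 0 := by
    intro x hx
    simp [hPdef, Submodule.projectionOnto_apply_of_mem_right hcompl hx]
  have hQapp : ∀ x, Q x = x - P x := fun x => rfl
  have hPQsum : ∀ x, P x + Q x = x := by intro x; simp [hQapp]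
  have hQmem : ∀ x, Q x ∈ Vm := by
    intro x
    have h0 : Vp.projectionOnto Vm hcompl (Q x) = 0 := by
      have h1 : Vp.projectionOnto Vm hcompl (P x) =
          Vp.projectionOnto Vm hcompl x :=
        Submodule.projectionOnto_apply_left hcompl
          (Vp.projectionOnto Vm hcompl x)
      simp [hQapp, map_sub, h1]
    exact (Submodule.projectionOnto_apply_eq_zero_iff hcompl).1 h0
  have hQm : ∀ x ∈ Vm, Q x = x := by
    intro x hx; simp [hQapp, hPm x hx]
  have hQp : ∀ x ∈ Vp, Q x = 0 := by
    intro x hx; simp [hQapp, hPp x hx]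
  have hPP : ∀ x, P (P x) = P x := fun x => hPp _ (hPmem x)
  have hQQ : ∀ x, Q (Q x) = Q x := fun x => hQm _ (hQmem x)
  have hPQ0 : ∀ x, P (Q x) = 0 := fun x => hPm _ (hQmem x)
  have hQP0 : ∀ x, Q (P x) = 0 := fun x => hQp _ (hPmem x)
  have horth' : ∀ x ∈ Vm, ∀ y ∈ Vp, B x y = 0 := by
    intro x hx y hy; rw [hB_symm]; exact horth y hy x hx
  -- adjointness of projections
  have hadjP : ∀ x y, B (P x) y = B x (P y) := by
    intro x y
    have h1 : B (P x) y = B (P x) (P y) := by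
      conv_lhs => rw [← hPQsum y]
      rw [map_add, horth _ (hPmem x) _ (hQmem y), add_zero]
    have h2 : B x (P y) = B (P x) (P y) := by
      conv_lhs => rw [← hPQsum x]
      rw [map_add, LinearMap.add_apply, horth' _ (hQmem x) _ (hPmem y), add_zero]
    rw [h1, h2]
  have hadjQ : ∀ x y, B (Q x) y = B x (Q y) := by
    intro x y
    have h1 : B (Q x) y = B (Q x) (Q y) := by
      conv_lhs => rw [← hPQsum y]
      rw [map_add, horth' _ (hQmem x) _ (hPmem y), zero_add]
    have h2 : B x (Q y) = B (Q x) (Q y) := by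
      conv_lhs => rw [← hPQsum x]
      rw [map_add, LinearMap.add_apply, horth _ (hPmem x) _ (hQmem y), zero_add]
    rw [h1, h2]
  have hsymmP : ∀ x y, B x (P y) = B y (P x) := by
    intro x y; rw [← hadjP, hB_symm]
  have hsymmQ : ∀ x y, B x (Q y) = B y (Q x) := by
    intro x y; rw [← hadjQ, hB_symm]
  -- bracket trilinear form identities
  have hC12 : ∀ x y z : 𝔤, B ⁅x, y⁆ z = -(B ⁅y, x⁆ z) := by
    intro x y z; rw [← lie_skew]; simp only [LinearMap.map_neg, LinearMap.neg_apply]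
  have hC23 : ∀ x y z : 𝔤, B ⁅x, y⁆ z = -(B ⁅x, z⁆ y) := by
    intro x y z
    rw [hB_inv x y z, hB_inv x z y, ← lie_skew]; simp only [LinearMap.map_neg, LinearMap.neg_apply]
  have hCcyc : ∀ x y z : 𝔤, B ⁅z, x⁆ y = B ⁅x, y⁆ z := by
    intro x y z; rw [hB_inv z x y, hB_symm]
  have hCsplit : ∀ x y z, B ⁅x, y⁆ z =
      B ⁅P x, P y⁆ (P z) + B ⁅P x, P y⁆ (Q z) + B ⁅P x, Q y⁆ (P z) + B ⁅P x, Q y⁆ (Q z) +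
      B ⁅Q x, P y⁆ (P z) + B ⁅Q x, P y⁆ (Q z) + B ⁅Q x, Q y⁆ (P z) + B ⁅Q x, Q y⁆ (Q z) := by
    intro x y z
    conv_lhs => rw [← hPQsum x, ← hPQsum y, ← hPQsum z]
    simp only [add_lie, lie_add, map_add, LinearMap.add_apply]
    ring
  -- the basic connection D₀
  obtain ⟨D₀, hD₀⟩ : ∃ D₀ : 𝔤 →ₗ[ℝ] 𝔤 →ₗ[ℝ] 𝔤, ∀ e a, D₀ e a =
      (3⁻¹ : ℝ) • P ⁅P e, P a⁆ + (3⁻¹ : ℝ) • Q ⁅Q e, Q a⁆ + P ⁅Q e, P a⁆ + Q ⁅P e, Q a⁆ := by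
    refine ⟨LinearMap.mk₂ ℝ (fun e a =>
      (3⁻¹ : ℝ) • P ⁅P e, P a⁆ + (3⁻¹ : ℝ) • Q ⁅Q e, Q a⁆ + P ⁅Q e, P a⁆ + Q ⁅P e, Q a⁆)
      ?_ ?_ ?_ ?_, fun e a => rfl⟩ <;> intros <;>
      simp only [map_add, map_smul, add_lie, lie_add, smul_lie, lie_smul, smul_add] <;>
      module
  -- divergence of D₀ and the correction functional
  set η : 𝔤 →ₗ[ℝ] ℝ := (LinearMap.trace ℝ 𝔤) ∘ₗ D₀.flip with hηdef
  set μ : 𝔤 →ₗ[ℝ] ℝ := ξ - η with hμdef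
  set np : ℕ := Module.finrank ℝ Vp with hnp
  set nm : ℕ := Module.finrank ℝ Vm with hnm
  have hnp0 : (1 : ℝ) - (np : ℝ) ≠ 0 := by
    have : (2 : ℝ) ≤ (np : ℝ) := by exact_mod_cast hdimp
    linarith
  have hnm0 : (1 : ℝ) - (nm : ℝ) ≠ 0 := by
    have : (2 : ℝ) ≤ (nm : ℝ) := by exact_mod_cast hdimm
    linarith
  -- find χ ∈ Vp with B χ y = (1-np)⁻¹ μ y for all y ∈ Vp
  have hexχ : ∀ (ν : 𝔤 →ₗ[ℝ] ℝ) (c : ℝ), ∃ χ ∈ Vp, ∀ y ∈ Vp, B χ y = c * ν y := by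
    intro ν c
    set Φ : Vp →ₗ[ℝ] Module.Dual ℝ Vp := B.compl₁₂ Vp.subtype Vp.subtype with hΦdef
    have hinj : Function.Injective Φ := by
      intro u v huv
      have h0 : Φ (u - v) = 0 := by rw [map_sub, huv, sub_self]
      have : (u : 𝔤) - (v : 𝔤) = 0 := by
        refine hndp _ (Submodule.sub_mem _ u.2 v.2) fun y hy => ?_
        have := congrFun (congrArg DFunLike.coe h0) ⟨y, hy⟩
        simpa [hΦdef] using this
      exact Subtype.ext (sub_eq_zero.mp this)
    have hsurj : Function.Surjective Φ :=
      (LinearMap.injective_iff_surjective_of_finrank_eq_finrank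
        (Subspace.dual_finrank_eq).symm).1 hinj
    obtain ⟨χ₀, hχ₀⟩ := hsurj (c • (ν ∘ₗ Vp.subtype))
    refine ⟨(χ₀ : 𝔤), χ₀.2, fun y hy => ?_⟩
    have := congrFun (congrArg DFunLike.coe hχ₀) ⟨y, hy⟩
    simpa [hΦdef, smul_eq_mul] using this
  have hexχ' : ∀ (ν : 𝔤 →ₗ[ℝ] ℝ) (c : ℝ), ∃ χ ∈ Vm, ∀ y ∈ Vm, B χ y = c * ν y := by
    intro ν c
    have hndm : ∀ x ∈ Vm, (∀ y ∈ Vm, B x y = 0) → x = 0 := by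
      intro x hx h
      refine hB_nondeg x fun y => ?_
      calc B x y = B x (P y + Q y) := by rw [hPQsum]
        _ = B x (P y) + B x (Q y) := map_add _ _ _
        _ = 0 := by rw [horth' x hx _ (hPmem y), h _ (hQmem y), add_zero]
    set Φ : Vm →ₗ[ℝ] Module.Dual ℝ Vm := B.compl₁₂ Vm.subtype Vm.subtype with hΦdef
    have hinj : Function.Injective Φ := by
      intro u v huv
      have h0 : Φ (u - v) = 0 := by rw [map_sub, huv, sub_self]
      have : (u : 𝔤) - (v : 𝔤) = 0 := by
        refine hndm _ (Submodule.sub_mem _ u.2 v.2) fun y hy => ?_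
        have := congrFun (congrArg DFunLike.coe h0) ⟨y, hy⟩
        simpa [hΦdef] using this
      exact Subtype.ext (sub_eq_zero.mp this)
    have hsurj : Function.Surjective Φ :=
      (LinearMap.injective_iff_surjective_of_finrank_eq_finrank
        (Subspace.dual_finrank_eq).symm).1 hinj
    obtain ⟨χ₀, hχ₀⟩ := hsurj (c • (ν ∘ₗ Vm.subtype))
    refine ⟨(χ₀ : 𝔤), χ₀.2, fun y hy => ?_⟩
    have := congrFun (congrArg DFunLike.coe hχ₀) ⟨y, hy⟩
    simpa [hΦdef, smul_eq_mul] using this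
  obtain ⟨χ, hχmem, hχval⟩ := hexχ μ ((1 - (np : ℝ))⁻¹)
  obtain ⟨χ', hχ'mem, hχ'val⟩ := hexχ' μ ((1 - (nm : ℝ))⁻¹)
  have hχproj : ∀ y, B χ y = B χ (P y) := by
    intro y
    conv_lhs => rw [← hPQsum y]
    rw [map_add, horth _ hχmem _ (hQmem y), add_zero]
  have hχ'proj : ∀ y, B χ' y = B χ' (Q y) := by
    intro y
    conv_lhs => rw [← hPQsum y]
    rw [map_add, horth' _ hχ'mem _ (hPmem y), zero_add]
  -- the correction tensors A, A'
  obtain ⟨A, hA⟩ : ∃ A : 𝔤 →ₗ[ℝ] 𝔤 →ₗ[ℝ] 𝔤, ∀ e a, A e a =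
      (B (P e) (P a)) • χ - (B χ (P a)) • P e := by
    refine ⟨LinearMap.mk₂ ℝ (fun e a => (B (P e) (P a)) • χ - (B χ (P a)) • P e)
      ?_ ?_ ?_ ?_, fun e a => rfl⟩ <;> intros <;>
      simp only [map_add, map_smul, LinearMap.add_apply, LinearMap.smul_apply,
        add_smul, smul_smul, smul_eq_mul, smul_sub] <;>
      module
  obtain ⟨A', hA'⟩ : ∃ A' : 𝔤 →ₗ[ℝ] 𝔤 →ₗ[ℝ] 𝔤, ∀ e a, A' e a =
      (B (Q e) (Q a)) • χ' - (B χ' (Q a)) • Q e := by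
    refine ⟨LinearMap.mk₂ ℝ (fun e a => (B (Q e) (Q a)) • χ' - (B χ' (Q a)) • Q e)
      ?_ ?_ ?_ ?_, fun e a => rfl⟩ <;> intros <;>
      simp only [map_add, map_smul, LinearMap.add_apply, LinearMap.smul_apply,
        add_smul, smul_smul, smul_eq_mul, smul_sub] <;>
      module
  refine ⟨D₀ + A + A', ?_, ?_, ?_, ?_, ?_⟩
  · -- skew-symmetry
    intro e a b
    rw [hB_symm a ((D₀ + A + A') e b)]
    simp only [LinearMap.add_apply, hD₀, hA, hA', map_add, map_sub, map_smul,
      LinearMap.add_apply, LinearMap.sub_apply, LinearMap.smul_apply, smul_eq_mul,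
      hadjP, hadjQ, hPP, hQQ, hPQ0, hQP0, map_zero, LinearMap.zero_apply]
    linear_combination (3⁻¹ : ℝ) * hC23 (P e) (P a) (P b) + (3⁻¹ : ℝ) * hC23 (Q e) (Q a) (Q b)
      + hC23 (Q e) (P a) (P b) + hC23 (P e) (Q a) (Q b)
      + B e (P a) * hχproj b + B e (P b) * hχproj a
      + B e (Q a) * hχ'proj b + B e (Q b) * hχ'proj a
  · -- Vp-compatibility
    intro e x hx
    simp only [LinearMap.add_apply, hD₀, hA, hA', hQp x hx, lie_zero, zero_lie, map_zero,
      smul_zero, add_zero, zero_smul, sub_zero, zero_add, zero_sub, neg_zero]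
    repeat'
      first
        | exact Submodule.smul_mem _ _ (hPmem _)
        | exact Submodule.smul_mem _ _ hχmem
        | exact hPmem _
        | exact Submodule.zero_mem _
        | apply Submodule.add_mem
        | apply Submodule.sub_mem
        | apply Submodule.neg_mem
  · -- Vm-compatibility
    intro e x hx
    simp only [LinearMap.add_apply, hD₀, hA, hA', hPm x hx, lie_zero, zero_lie,
      map_zero, smul_zero, add_zero, zero_smul, sub_zero, zero_add, zero_sub, neg_zero]
    repeat'
      first
        | exact Submodule.smul_mem _ _ (hQmem _)
        | exact Submodule.smul_mem _ _ hχ'mem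
        | exact hQmem _
        | exact Submodule.zero_mem _
        | apply Submodule.add_mem
        | apply Submodule.sub_mem
        | apply Submodule.neg_mem
  · -- torsion-free
    intro e₁ e₂ e₃
    simp only [map_sub, LinearMap.sub_apply, LinearMap.add_apply, hD₀, hA, hA', map_add,
      map_smul, LinearMap.smul_apply, smul_eq_mul,
      hadjP, hadjQ, hPP, hQQ, hPQ0, hQP0, map_zero, LinearMap.zero_apply]
    linear_combination (-1 : ℝ) * hCsplit e₁ e₂ e₃
      - (3⁻¹ : ℝ) * hC12 (P e₂) (P e₁) (P e₃) - (3⁻¹ : ℝ) * hC12 (Q e₂) (Q e₁) (Q e₃)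
      - hC12 (Q e₂) (P e₁) (P e₃) - hC12 (P e₂) (Q e₁) (Q e₃)
      + (3⁻¹ : ℝ) * hCcyc (P e₁) (P e₂) (P e₃) + (3⁻¹ : ℝ) * hCcyc (Q e₁) (Q e₂) (Q e₃)
      + hCcyc (P e₁) (P e₂) (Q e₃) + hCcyc (Q e₁) (Q e₂) (P e₃)
      + B χ e₃ * hsymmP e₁ e₂ + B χ (P e₁) * hsymmP e₂ e₃
      + B e₃ (P e₁) * hχproj e₂ + B χ (P e₂) * hsymmP e₃ e₁
      + B χ' e₃ * hsymmQ e₁ e₂ + B χ' (Q e₁) * hsymmQ e₂ e₃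
      + B e₃ (Q e₁) * hχ'proj e₂ + B χ' (Q e₂) * hsymmQ e₃ e₁
  · -- divergence
    intro e
    have hPproj : LinearMap.IsProj Vp P := ⟨hPmem, hPp⟩
    have hQproj : LinearMap.IsProj Vm Q := ⟨hQmem, hQm⟩
    have htrP : LinearMap.trace ℝ 𝔤 P = (np : ℝ) := hPproj.trace
    have htrQ : LinearMap.trace ℝ 𝔤 Q = (nm : ℝ) := hQproj.trace
    have hflip : (D₀ + A + A').flip e = D₀.flip e
        + (((B.flip (P e)) ∘ₗ P).smulRight χ - (B χ (P e)) • P)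
        + (((B.flip (Q e)) ∘ₗ Q).smulRight χ' - (B χ' (Q e)) • Q) := by
      ext a
      simp only [LinearMap.flip_apply, LinearMap.add_apply, LinearMap.sub_apply,
        LinearMap.smul_apply, LinearMap.smulRight_apply, LinearMap.comp_apply, hA, hA']
    rw [hflip]
    simp only [map_add, map_sub, map_smul, my_trace_smulRight, smul_eq_mul, htrP, htrQ]
    have hη : LinearMap.trace ℝ 𝔤 (D₀.flip e) = η e := rfl
    rw [hη]
    simp only [LinearMap.comp_apply, LinearMap.flip_apply]
    rw [hPp χ hχmem, hQm χ' hχ'mem]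
    have hv1 : B χ (P e) = (1 - (np : ℝ))⁻¹ * μ (P e) := hχval _ (hPmem e)
    have hv2 : B χ' (Q e) = (1 - (nm : ℝ))⁻¹ * μ (Q e) := hχ'val _ (hQmem e)
    have hμsum : μ (P e) + μ (Q e) = ξ e - η e := by
      rw [← map_add, hPQsum, hμdef]; simp
    have e1 : (1 - (np : ℝ))⁻¹ * μ (P e) - (1 - (np : ℝ))⁻¹ * μ (P e) * (np : ℝ)
        = μ (P e) := by field_simp
    have e2 : (1 - (nm : ℝ))⁻¹ * μ (Q e) - (1 - (nm : ℝ))⁻¹ * μ (Q e) * (nm : ℝ)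
        = μ (Q e) := by field_simp
    rw [hv1, hv2]
    linear_combination e1 + e2 + hμsum
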